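/- Let 𝒪 be a factorial ring, k ≥ 2 an integer, and f_1, …, f_k ∈ 𝒪 elements such that each f_i is not a unit and f_i, f_j are relatively prime for all i ≠ j. Set F := f_1 f_2 ⋯ f_k. Then the diagonal map 𝒪/(F) → ⊕_{i=1}^k 𝒪/(f_i) is injective, and its cokernel N admits a filtration by 𝒪-submodules 0 = N_0 ⊆ N_1 ⊆ ⋯ ⊆ N_{k−1} = N such that N_i / N_{i−1} ≅ 𝒪/(f_i, f_{i+1} f_{i+2} ⋯ f_k) as 𝒪-modules for i = 1, …, k−1. -/

import Mathlib

open Ideal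

/-- The diagonal map `𝒪/(f₁⋯f_k) → ⊕ᵢ 𝒪/(fᵢ)`, as an `𝒪`-linear map. -/
noncomputable def diagLinMap {O : Type*} [CommRing O] {k : ℕ} (f : Fin k → O) :
    (O ⧸ Ideal.span {∏ i, f i}) →ₗ[O] ∀ i : Fin k, O ⧸ Ideal.span {f i} :=
  Submodule.liftQ (Ideal.span {∏ i, f i})
    (LinearMap.pi fun i => (Ideal.span {f i}).mkQ)
    (by
      rw [Ideal.span_le, Set.singleton_subset_iff]
      simp only [SetLike.mem_coe, LinearMap.mem_ker]
      funext i
      simp only [LinearMap.pi_apply, Submodule.mkQ_apply, Pi.zero_apply,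
        Submodule.Quotient.mk_eq_zero]
      exact Ideal.mem_span_singleton.mpr (Finset.dvd_prod_of_mem f (Finset.mem_univ i)))

lemma myProdDvd {O ι : Type*} [CommMonoidWithZero O] [DecompositionMonoid O]
    (s : Finset ι) (f : ι → O)
    (h : ∀ i ∈ s, ∀ j ∈ s, i ≠ j → IsRelPrime (f i) (f j)) {x : O}
    (hd : ∀ i ∈ s, f i ∣ x) : (∏ i ∈ s, f i) ∣ x := by
  classical
  induction s using Finset.induction with
  | empty => simpa using one_dvd x
  | @insert a s ha ih =>
    rw [Finset.prod_insert ha]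
    refine IsRelPrime.mul_dvd ?_ (hd a (by simp)) (ih ?_ ?_)
    · exact IsRelPrime.prod_right fun j hj =>
        h a (by simp) j (by simp [hj]) (by rintro rfl; exact ha hj)
    · exact fun i hi j hj hij => h i (by simp [hi]) j (by simp [hj]) hij
    · exact fun i hi => hd i (by simp [hi])

lemma myDiagApply {O : Type*} [CommRing O] {k : ℕ} (f : Fin k → O) (c : O) :
    diagLinMap f (Submodule.Quotient.mk c) =
      fun j => Submodule.Quotient.mk c := by
  rfl

/-- generic: for surjective σ and submodule q of target, B⧸q ≃ A⧸comap σ q. -/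
noncomputable def quotComapEquiv {R A B : Type*} [CommRing R] [AddCommGroup A] [Module R A]
    [AddCommGroup B] [Module R B] (σ : A →ₗ[R] B) (hσ : Function.Surjective σ)
    (q : Submodule R B) : (B ⧸ q) ≃ₗ[R] (A ⧸ q.comap σ) :=
  (LinearEquiv.ofBijective
    (Submodule.liftQ (q.comap σ) (q.mkQ.comp σ)
      (by intro x hx; simpa using hx))
    ⟨by
      rw [← LinearMap.ker_eq_bot, Submodule.ker_liftQ_eq_bot]
      intro x hx
      simpa using hx,
     by
      rintro b
      obtain ⟨b, rfl⟩ := q.mkQ_surjective b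
      obtain ⟨a, rfl⟩ := hσ b
      exact ⟨Submodule.Quotient.mk a, rfl⟩⟩).symm

/-- The submodule of `∏ⱼ O⧸(fⱼ)` of elements vanishing in coordinates `≥ i`. -/
def Psub {O : Type*} [CommRing O] {k : ℕ} (f : Fin k → O) (i : ℕ) :
    Submodule O (∀ j : Fin k, O ⧸ Ideal.span {f j}) where
  carrier := {x | ∀ j : Fin k, i ≤ j.val → x j = 0}
  add_mem' := fun ha hb j hj => by simp [ha j hj, hb j hj]
  zero_mem' := fun j _ => rfl
  smul_mem' := fun c x hx => fun j hj => by simp [hx j hj]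

lemma Psub_mono {O : Type*} [CommRing O] {k : ℕ} (f : Fin k → O) :
    Monotone (Psub f) := fun i i' h x hx j hj => hx j (le_trans h hj)


set_option maxHeartbeats 1000000 in
/-- Corollary 1.4: for `𝒪` a factorial ring and `f₁, …, f_k` pairwise relatively prime
non-units, the diagonal map `𝒪/(F) → ⊕ᵢ 𝒪/(fᵢ)` (where `F = f₁f₂⋯f_k`) is injective,
and its cokernel `N` admits a filtration `0 = N₀ ⊆ N₁ ⊆ ⋯ ⊆ N_{k-1} = N` with
`Nᵢ/N_{i-1} ≅ 𝒪/(fᵢ, f_{i+1}⋯f_k)` for `i = 1, …, k-1` (here `f` is `0`-indexed, so the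
paper's `fᵢ` is `f ⟨i-1, _⟩`). -/
theorem coker_diag_filtration {O : Type*} [CommRing O] [IsDomain O]
    [UniqueFactorizationMonoid O] (k : ℕ) (hk : 2 ≤ k) (f : Fin k → O)
    (hunit : ∀ i, ¬ IsUnit (f i))
    (hrel : ∀ i j, i ≠ j → IsRelPrime (f i) (f j)) :
    Function.Injective (diagLinMap f) ∧
    ∃ N : ℕ → Submodule O ((∀ i : Fin k, O ⧸ Ideal.span {f i}) ⧸
        LinearMap.range (diagLinMap f)),
      Monotone N ∧ N 0 = ⊥ ∧ N (k - 1) = ⊤ ∧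
      ∀ (i : ℕ) (_h1 : 1 ≤ i) (_h2 : i ≤ k - 1),
        Nonempty ((N i ⧸ Submodule.comap (N i).subtype (N (i - 1))) ≃ₗ[O]
          O ⧸ Ideal.span {f ⟨i - 1, by omega⟩,
            ∏ j ∈ Finset.univ.filter fun j : Fin k => i ≤ j.val, f j}) := by
  classical
  set R := LinearMap.range (diagLinMap f) with hRdef
  have hinj : Function.Injective (diagLinMap f) := by
    rw [← LinearMap.ker_eq_bot]
    apply Submodule.ker_liftQ_eq_bot
    intro x hx
    simp only [LinearMap.mem_ker] at hx
    rw [Ideal.mem_span_singleton]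
    refine myProdDvd Finset.univ f (fun i _ j _ hij => hrel i j hij) fun i _ => ?_
    have h2 := congrFun hx i
    simp only [LinearMap.pi_apply, Submodule.mkQ_apply, Pi.zero_apply,
      Submodule.Quotient.mk_eq_zero] at h2
    exact Ideal.mem_span_singleton.mp h2
  refine ⟨hinj, fun i => (Psub f i).map R.mkQ, ?_, ?_, ?_, ?_⟩
  · exact fun i i' h => Submodule.map_mono (Psub_mono f h)
  · have : Psub f 0 = ⊥ := by
      ext x
      simp only [Submodule.mem_bot]
      constructor
      · intro hx; funext j; exact hx j (Nat.zero_le _)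
      · rintro rfl; exact fun j _ => rfl
    show Submodule.map R.mkQ (Psub f 0) = ⊥
    rw [this, Submodule.map_bot]
  · show Submodule.map R.mkQ (Psub f (k-1)) = ⊤
    rw [eq_top_iff]
    rintro q -
    obtain ⟨m, rfl⟩ := R.mkQ_surjective q
    have hlast : k - 1 < k := by omega
    obtain ⟨c, hc⟩ := Submodule.Quotient.mk_surjective _ (m ⟨k - 1, hlast⟩)
    refine ⟨m - diagLinMap f (Submodule.Quotient.mk c), fun j hj => ?_, ?_⟩
    · have hj' : j = ⟨k - 1, hlast⟩ :=
        Fin.ext (by have := j.isLt; simp only [Fin.val_mk]; omega)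
      subst hj'
      simp only [Pi.sub_apply, myDiagApply, hc, sub_self]
    · rw [map_sub]
      have : R.mkQ (diagLinMap f (Submodule.Quotient.mk c)) = 0 := by
        rw [Submodule.mkQ_apply, Submodule.Quotient.mk_eq_zero]
        exact LinearMap.mem_range_self _ _
      rw [this, sub_zero]
  · intro i h1 h2
    have hi0 : i - 1 < k := by omega
    set i0 : Fin k := ⟨i - 1, hi0⟩ with hi0def
    set g : O := ∏ j ∈ Finset.univ.filter fun j : Fin k => i ≤ j.val, f j with hgdef
    have hfdvdg : ∀ j : Fin k, i ≤ j.val → f j ∣ g := fun j hj =>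
      Finset.dvd_prod_of_mem f (Finset.mem_filter.mpr ⟨Finset.mem_univ j, hj⟩)
    set A := Psub f i with hAdef
    set θ : A →ₗ[O] _ := R.mkQ.comp A.subtype with hθdef
    have hθapp : ∀ a : A, θ a = R.mkQ (a : ∀ j : Fin k, O ⧸ Ideal.span {f j}) :=
      fun a => rfl
    have hθrange : LinearMap.range θ = (Psub f i).map R.mkQ := by
      rw [hθdef, LinearMap.range_comp, Submodule.range_subtype]
    set θ' : A →ₗ[O] ((Psub f i).map R.mkQ) :=
      θ.codRestrict ((Psub f i).map R.mkQ)
        (fun a => hθrange ▸ LinearMap.mem_range_self θ a) with hθ'def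
    have hθ'surj : Function.Surjective θ' := by
      rintro ⟨b, hb⟩
      rw [← hθrange] at hb
      obtain ⟨a, ha⟩ := hb
      exact ⟨a, Subtype.ext ha⟩
    set π : (O ⧸ Ideal.span {f i0}) →ₗ[O] O ⧸ Ideal.span {f i0, g} :=
      Submodule.liftQ _ (Ideal.span {f i0, g}).mkQ
        (by
          intro x hx
          simp only [LinearMap.mem_ker, Submodule.mkQ_apply,
            Submodule.Quotient.mk_eq_zero]
          exact Ideal.span_mono (Set.singleton_subset_iff.mpr (by simp)) hx) with hπdef
    have hπapp : ∀ c : O, π (Submodule.Quotient.mk c) = Submodule.Quotient.mk c :=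
      fun c => rfl
    set ψ : A →ₗ[O] O ⧸ Ideal.span {f i0, g} :=
      π.comp ((LinearMap.proj i0).comp A.subtype) with hψdef
    have hψapp : ∀ a : A, ψ a = π ((a : ∀ j : Fin k, O ⧸ Ideal.span {f j}) i0) :=
      fun a => rfl
    have hψsurj : Function.Surjective ψ := by
      intro t
      obtain ⟨c, rfl⟩ := Submodule.Quotient.mk_surjective _ t
      have hmem : (Pi.single i0 (Submodule.Quotient.mk c) :
          ∀ j : Fin k, O ⧸ Ideal.span {f j}) ∈ Psub f i := by
        intro j hj
        have : j ≠ i0 := by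
          intro hji; rw [hji] at hj; simp only [hi0def] at hj; omega
        exact Pi.single_eq_of_ne this _
      refine ⟨⟨_, hmem⟩, ?_⟩
      rw [hψapp]
      simp only [Pi.single_eq_same]
      exact hπapp c
    have hker : Submodule.comap θ'
        (Submodule.comap ((Psub f i).map R.mkQ).subtype ((Psub f (i-1)).map R.mkQ))
        = LinearMap.ker ψ := by
      have hcoe : ∀ x : A, ((Psub f i).map R.mkQ).subtype (θ' x) = R.mkQ (x : ∀ j : Fin k, O ⧸ Ideal.span {f j}) := fun x => rfl
      ext a
      obtain ⟨a, haA⟩ := a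
      simp only [Submodule.mem_comap, LinearMap.mem_ker, hcoe]
      constructor
      · intro hmem
        obtain ⟨b, hbP, hba⟩ := hmem
        have hba' : R.mkQ b = R.mkQ a := hba
        have hab : a - b ∈ R := by
          have h0 : R.mkQ (a - b) = 0 := by
            rw [map_sub, hba', sub_self]
          rwa [Submodule.mkQ_apply, Submodule.Quotient.mk_eq_zero] at h0
        rw [hRdef, LinearMap.mem_range] at hab
        obtain ⟨q, hq⟩ := hab
        obtain ⟨c, rfl⟩ := Submodule.Quotient.mk_surjective _ q
        have hco : ∀ j : Fin k, a j - b j = Submodule.Quotient.mk c := by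
          intro j
          have := congrFun (hq.symm.trans (myDiagApply f c)) j
          simpa using this
        have hdvd : ∀ j : Fin k, i ≤ j.val → f j ∣ c := by
          intro j hj
          have h0 := hco j
          rw [haA j hj, hbP j (by omega), sub_zero] at h0
          exact Ideal.mem_span_singleton.mp
            ((Submodule.Quotient.mk_eq_zero _).mp h0.symm)
        have hgc : g ∣ c := by
          rw [hgdef]
          refine myProdDvd _ f (fun x _ y _ hxy => hrel x y hxy) fun j hj => ?_
          exact hdvd j (Finset.mem_filter.mp hj).2
        have hai0 : a i0 = Submodule.Quotient.mk c := by
          have h0 := hco i0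
          rwa [hbP i0 (le_refl _), sub_zero] at h0
        show π ((a : ∀ j : Fin k, O ⧸ Ideal.span {f j}) i0) = 0
        rw [hai0, hπapp, Submodule.Quotient.mk_eq_zero]
        obtain ⟨d, rfl⟩ := hgc
        exact Ideal.mul_mem_right d _
          (Ideal.subset_span (Set.mem_insert_of_mem _ rfl))
      · intro hmem
        obtain ⟨c, hc⟩ := Submodule.Quotient.mk_surjective _ (a i0)
        have hmem' : π ((a : ∀ j : Fin k, O ⧸ Ideal.span {f j}) i0) = 0 := hmem
        rw [← hc, hπapp, Submodule.Quotient.mk_eq_zero] at hmem'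
        replace hmem := hmem'
        obtain ⟨u, v, huv⟩ := Ideal.mem_span_pair.mp hmem
        set d := diagLinMap f (Submodule.Quotient.mk (v * g)) with hddef
        have hgoal : R.mkQ a ∈ Submodule.map R.mkQ (Psub f (i-1)) := by
          refine Submodule.mem_map.mpr ⟨a - d, ?_, ?_⟩
          · intro j hj
            have hdj : d j = Submodule.Quotient.mk (v * g) :=
              congrFun (myDiagApply f (v * g)) j
            rcases Nat.lt_or_ge j.val i with hlt | hge
            · have : j = i0 := Fin.ext (by show j.val = i - 1; omega)
              subst this
              simp only [Pi.sub_apply, hdj, ← hc]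
              rw [← Submodule.Quotient.mk_sub, Submodule.Quotient.mk_eq_zero]
              refine Ideal.mem_span_singleton.mpr ⟨u, ?_⟩
              linear_combination -huv
            · simp only [Pi.sub_apply, hdj, haA j hge]
              rw [zero_sub, neg_eq_zero, Submodule.Quotient.mk_eq_zero]
              exact Ideal.mem_span_singleton.mpr ((hfdvdg j hge).mul_left v)
          · show R.mkQ (a - d) = R.mkQ a
            rw [map_sub]
            have hd0 : R.mkQ d = 0 := by
              rw [Submodule.mkQ_apply, Submodule.Quotient.mk_eq_zero]
              exact LinearMap.mem_range_self _ _
            rw [hd0, sub_zero]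
        exact hgoal
    exact ⟨(quotComapEquiv θ' hθ'surj _).trans
      ((Submodule.quotEquivOfEq _ _ hker).trans (ψ.quotKerEquivOfSurjective hψsurj))⟩
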